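/- For the GHZ state |GHZ> = (|000>+|111>)/√2 with single-qubit observables A0 = [[0,e^{-iπ/6}],[e^{iπ/6},0]] and A1 = [[0,e^{-i2π/3}],[e^{i2π/3},0]] on each party, the expectation values satisfy <A0⊗A1⊗A0> = <A1⊗A0⊗A0> = <A0⊗A0⊗A1> = -1 and <A1⊗A1⊗A1> = +1, while all single-body and two-body expectation values (with identity on the remaining parties) vanish. -/

import Mathlib

open Kronecker Matrix

/-- The observables `![A0, A1]` with `A0 = [[0, e^{-iπ/6}], [e^{iπ/6}, 0]]` and
`A1 = [[0, e^{-i2π/3}], [e^{i2π/3}, 0]]`. -/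
noncomputable def obs : Fin 2 → Matrix (Fin 2) (Fin 2) ℂ :=
  ![!![0, Complex.exp (-(Complex.I * (Real.pi / 6)));
      Complex.exp (Complex.I * (Real.pi / 6)), 0],
    !![0, Complex.exp (-(Complex.I * (2 * Real.pi / 3)));
      Complex.exp (Complex.I * (2 * Real.pi / 3)), 0]]

/-- The GHZ state `(|000⟩ + |111⟩)/√2`. -/
noncomputable def ghzVec : ((Fin 2 × Fin 2) × Fin 2) → ℂ :=
  fun p => if p = ((0, 0), 0) ∨ p = ((1, 1), 1) then ((1 / Real.sqrt 2 : ℝ) : ℂ) else 0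

/-- Expectation value `⟨GHZ|O|GHZ⟩` of an operator on `(ℂ²)^{⊗3}`. -/
noncomputable def ghzExp (O : Matrix ((Fin 2 × Fin 2) × Fin 2) ((Fin 2 × Fin 2) × Fin 2) ℂ) : ℂ :=
  star ghzVec ⬝ᵥ O.mulVec ghzVec

lemma ghzExp_eq (O : Matrix ((Fin 2 × Fin 2) × Fin 2) ((Fin 2 × Fin 2) × Fin 2) ℂ) :
    ghzExp O = (O ((0,0),0) ((0,0),0) + O ((0,0),0) ((1,1),1)
      + O ((1,1),1) ((0,0),0) + O ((1,1),1) ((1,1),1)) / 2 := by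
  have h2 : ((Real.sqrt 2 : ℝ) : ℂ) * ((Real.sqrt 2 : ℝ) : ℂ) = 2 := by
    norm_cast
    rw [Real.mul_self_sqrt] <;> norm_num
  simp only [ghzExp, ghzVec, dotProduct, mulVec, Fintype.sum_prod_type, Fin.sum_univ_succ,
    Fin.sum_univ_zero, Prod.mk.injEq]
  simp [ghzVec, Prod.ext_iff, Fin.ext_iff]
  field_simp
  rw [sq, h2]
  ring

/-- On the GHZ state, `⟨A0⊗A1⊗A0⟩ = ⟨A1⊗A0⊗A0⟩ = ⟨A0⊗A0⊗A1⟩ = -1`,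
`⟨A1⊗A1⊗A1⟩ = +1`, and all single-body and two-body expectation values vanish. -/
theorem ghz_correlators :
    ghzExp (obs 0 ⊗ₖ obs 1 ⊗ₖ obs 0) = -1 ∧
    ghzExp (obs 1 ⊗ₖ obs 0 ⊗ₖ obs 0) = -1 ∧
    ghzExp (obs 0 ⊗ₖ obs 0 ⊗ₖ obs 1) = -1 ∧
    ghzExp (obs 1 ⊗ₖ obs 1 ⊗ₖ obs 1) = 1 ∧
    (∀ x : Fin 2,
      ghzExp (obs x ⊗ₖ (1 : Matrix (Fin 2) (Fin 2) ℂ) ⊗ₖ (1 : Matrix (Fin 2) (Fin 2) ℂ)) = 0 ∧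
      ghzExp ((1 : Matrix (Fin 2) (Fin 2) ℂ) ⊗ₖ obs x ⊗ₖ (1 : Matrix (Fin 2) (Fin 2) ℂ)) = 0 ∧
      ghzExp ((1 : Matrix (Fin 2) (Fin 2) ℂ) ⊗ₖ (1 : Matrix (Fin 2) (Fin 2) ℂ) ⊗ₖ obs x) = 0) ∧
    (∀ x y : Fin 2,
      ghzExp (obs x ⊗ₖ obs y ⊗ₖ (1 : Matrix (Fin 2) (Fin 2) ℂ)) = 0 ∧
      ghzExp (obs x ⊗ₖ (1 : Matrix (Fin 2) (Fin 2) ℂ) ⊗ₖ obs y) = 0 ∧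
      ghzExp ((1 : Matrix (Fin 2) (Fin 2) ℂ) ⊗ₖ obs x ⊗ₖ obs y) = 0) := by
  have hpi : Complex.exp (-(Real.pi * Complex.I)) = -1 := by
    rw [Complex.exp_neg, Complex.exp_pi_mul_I]; norm_num
  have hpi' : Complex.exp ((Real.pi : ℂ) * Complex.I) = -1 := Complex.exp_pi_mul_I
  refine ⟨?_, ?_, ?_, ?_, ?_, ?_⟩
  · simp [ghzExp_eq, kroneckerMap_apply, obs, ← Complex.exp_add]
    rw [show -(Complex.I * (Real.pi/6)) + -(Complex.I * (2*Real.pi/3)) + -(Complex.I * (Real.pi/6))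
        = -(Real.pi * Complex.I) by ring,
      show Complex.I * (Real.pi/6) + Complex.I * (2*Real.pi/3) + Complex.I * (Real.pi/6)
        = (Real.pi : ℂ) * Complex.I by ring, hpi, hpi']
    norm_num
  · simp [ghzExp_eq, kroneckerMap_apply, obs, ← Complex.exp_add]
    rw [show -(Complex.I * (2*Real.pi/3)) + -(Complex.I * (Real.pi/6)) + -(Complex.I * (Real.pi/6))
        = -(Real.pi * Complex.I) by ring,
      show Complex.I * (2*Real.pi/3) + Complex.I * (Real.pi/6) + Complex.I * (Real.pi/6)
        = (Real.pi : ℂ) * Complex.I by ring, hpi, hpi']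
    norm_num
  · simp [ghzExp_eq, kroneckerMap_apply, obs, ← Complex.exp_add]
    rw [show -(Complex.I * (Real.pi/6)) + -(Complex.I * (Real.pi/6)) + -(Complex.I * (2*Real.pi/3))
        = -(Real.pi * Complex.I) by ring,
      show Complex.I * (Real.pi/6) + Complex.I * (Real.pi/6) + Complex.I * (2*Real.pi/3)
        = (Real.pi : ℂ) * Complex.I by ring, hpi, hpi']
    norm_num
  · simp [ghzExp_eq, kroneckerMap_apply, obs, ← Complex.exp_add]
    rw [show -(Complex.I * (2*Real.pi/3)) + -(Complex.I * (2*Real.pi/3)) + -(Complex.I * (2*Real.pi/3))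
        = -((2*Real.pi : ℝ) : ℂ) * Complex.I by push_cast; ring,
      show Complex.I * (2*Real.pi/3) + Complex.I * (2*Real.pi/3) + Complex.I * (2*Real.pi/3)
        = ((2*Real.pi : ℝ) : ℂ) * Complex.I by push_cast; ring]
    rw [neg_mul, Complex.exp_neg]
    have : Complex.exp (((2*Real.pi : ℝ) : ℂ) * Complex.I) = 1 := by
      push_cast
      rw [show (2:ℂ) * Real.pi * Complex.I = 2 * Real.pi * Complex.I by ring]
      exact Complex.exp_two_pi_mul_I
    rw [this]; norm_num
  · intro x
    fin_cases x <;>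
      refine ⟨?_, ?_, ?_⟩ <;>
        simp [ghzExp_eq, kroneckerMap_apply, obs, Matrix.one_apply]
  · intro x y
    fin_cases x <;> fin_cases y <;>
      refine ⟨?_, ?_, ?_⟩ <;>
        simp [ghzExp_eq, kroneckerMap_apply, obs, Matrix.one_apply]
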